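/- Let $Q_r \subset \mathbb{R}^n$ be a closed cube of side length $r > 0$ and let $A \subseteq \mathbb{R}^n$ be open. Suppose there exists $c_\sharp \in (0,1)$ such that $\min\{|A \cap Q_r|, |Q_r \setminus \overline{A}|\} \ge c_\sharp r^n$. For $k \in \mathbb{N}$, let $\mathcal{P}$ be the partition of $Q_r$ into $k^n$ closed subcubes of side $r/k$ with sides parallel to those of $Q_r$. Then the number of cubes $Q \in \mathcal{P}$ with $Q \cap \partial A \ne \varnothing$ is at least $c_\star k^{n-1}$, for some constant $c_\star \in (0,1)$ depending only on $n$ and $c_\sharp$. -/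

import Mathlib

open MeasureTheory Set
open scoped Classical


def GSep {m k : ℕ} (W B : Finset (Fin m → Fin k)) : Prop :=
  ∀ w ∈ W, ∀ b ∈ B, ∃ i, 2 ≤ (((w i : ℕ) : ℤ) - ((b i : ℕ) : ℤ)).natAbs

lemma gsep_symm {m k : ℕ} {W B : Finset (Fin m → Fin k)} (h : GSep W B) : GSep B W := by
  intro b hb w hw
  obtain ⟨i, hi⟩ := h w hw b hb
  exact ⟨i, by omega⟩

lemma gsep_not_adj {m k : ℕ} {W B : Finset (Fin (m+1) → Fin k)} (h : GSep W B)
    {p : Fin m → Fin k} {s t : Fin k} (hs : Fin.cons s p ∈ W) (ht : Fin.cons t p ∈ B)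
    (hst : (((s:ℕ):ℤ) - ((t:ℕ):ℤ)).natAbs ≤ 1) : False := by
  obtain ⟨i, hi⟩ := h _ hs _ ht
  induction i using Fin.cases with
  | zero => simp only [Fin.cons_zero] at hi; omega
  | succ j => simp [Fin.cons_succ] at hi

lemma line_gray_aux {m k : ℕ} {W B G : Finset (Fin (m+1) → Fin k)}
    (cover : ∀ x, x ∈ W ∨ x ∈ B ∨ x ∈ G) (sep : GSep W B)
    {p : Fin m → Fin k} {t : Fin k} (ht : Fin.cons t p ∈ B) :
    ∀ d (s : Fin k), (s:ℕ) + d = (t:ℕ) → Fin.cons s p ∈ W → ∃ u, Fin.cons u p ∈ G := by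
  intro d
  induction d with
  | zero =>
    intro s hs hW
    have : s = t := Fin.ext (by omega)
    subst this
    exact absurd (gsep_not_adj sep hW ht (by omega)) (fun h => h.elim)
  | succ d ih =>
    intro s hs hW
    have hlt : (s:ℕ) + 1 < k := by have := t.isLt; omega
    set s' : Fin k := ⟨(s:ℕ)+1, hlt⟩ with hs'
    rcases cover (Fin.cons s' p) with h | h | h
    · exact ih s' (by simp [hs']; omega) h
    · exact absurd (gsep_not_adj sep hW h (by simp [hs'])) (fun h => h.elim)
    · exact ⟨s', h⟩

lemma line_gray {m k : ℕ} {W B G : Finset (Fin (m+1) → Fin k)}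
    (cover : ∀ x, x ∈ W ∨ x ∈ B ∨ x ∈ G) (sep : GSep W B)
    {p : Fin m → Fin k} {s t : Fin k} (hs : Fin.cons s p ∈ W) (ht : Fin.cons t p ∈ B) :
    ∃ u, Fin.cons u p ∈ G := by
  rcases le_total (s:ℕ) (t:ℕ) with h | h
  · exact line_gray_aux cover sep ht ((t:ℕ) - s) s (by omega) hs
  · exact line_gray_aux (fun x => by rcases cover x with h|h|h; exacts [Or.inr (Or.inl h), Or.inl h, Or.inr (Or.inr h)])
      (gsep_symm sep) hs ((s:ℕ) - t) t (by omega) ht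

def slab {m k : ℕ} (S : Finset (Fin (m+1) → Fin k)) (s : Fin k) : Finset (Fin m → Fin k) :=
  Finset.univ.filter fun p => Fin.cons s p ∈ S

lemma card_eq_sum_slab {m k : ℕ} (S : Finset (Fin (m+1) → Fin k)) :
    S.card = ∑ s : Fin k, (slab S s).card := by
  rw [Finset.card_eq_sum_card_fiberwise (f := fun x => x 0) (t := Finset.univ) (fun x _ => Finset.mem_univ _)]
  refine Finset.sum_congr rfl fun s _ => ?_
  apply Finset.card_bij (fun x _ => Fin.tail x)
  · intro a ha
    simp only [Finset.mem_filter, Finset.mem_univ, true_and] at ha ⊢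
    simp [slab]
    rw [← ha.2]
    rw [Fin.cons_self_tail]
    exact ha.1
  · intro a ha b hb hab
    simp only [Finset.mem_filter] at ha hb
    have : Fin.cons (a 0) (Fin.tail a) = Fin.cons (b 0) (Fin.tail b) := by
      rw [Fin.cons_self_tail, Fin.cons_self_tail, ]
      exact funext fun i => by
        induction i using Fin.cases with
        | zero => rw [ha.2, hb.2]
        | succ j => exact congrFun hab j
    rw [Fin.cons_self_tail, Fin.cons_self_tail] at this
    exact this
  · intro p hp
    simp only [slab, Finset.mem_filter, Finset.mem_univ, true_and] at hp
    exact ⟨Fin.cons s p, by simp [hp, Fin.cons_zero], by simp [Fin.tail_cons]⟩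

lemma slab_card_le {m k : ℕ} (S : Finset (Fin (m+1) → Fin k)) (s : Fin k) :
    (slab S s).card ≤ k ^ m := by
  calc (slab S s).card ≤ (Finset.univ : Finset (Fin m → Fin k)).card := Finset.card_le_card (by simp [slab])
  _ = k ^ m := by simp [Finset.card_univ]

lemma slab_cover {m k : ℕ} {W B G : Finset (Fin (m+1) → Fin k)}
    (cover : ∀ x, x ∈ W ∨ x ∈ B ∨ x ∈ G) (s : Fin k) :
    ∀ p, p ∈ slab W s ∨ p ∈ slab B s ∨ p ∈ slab G s := by
  intro p
  simpa [slab] using cover (Fin.cons s p)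

lemma slab_cover_card {m k : ℕ} {W B G : Finset (Fin (m+1) → Fin k)}
    (cover : ∀ x, x ∈ W ∨ x ∈ B ∨ x ∈ G) (s : Fin k) :
    k ^ m ≤ (slab W s).card + (slab B s).card + (slab G s).card := by
  have h1 : (Finset.univ : Finset (Fin m → Fin k)) ⊆ slab W s ∪ slab B s ∪ slab G s := by
    intro p _
    rcases slab_cover cover s p with h | h | h <;> simp [h]
  calc k ^ m = (Finset.univ : Finset (Fin m → Fin k)).card := by simp [Finset.card_univ]
    _ ≤ (slab W s ∪ slab B s ∪ slab G s).card := Finset.card_le_card h1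
    _ ≤ (slab W s ∪ slab B s).card + (slab G s).card := Finset.card_union_le _ _
    _ ≤ (slab W s).card + (slab B s).card + (slab G s).card :=
        Nat.add_le_add_right (Finset.card_union_le _ _) _

lemma gsep_slab {m k : ℕ} {W B : Finset (Fin (m+1) → Fin k)} (h : GSep W B) (s : Fin k) :
    GSep (slab W s) (slab B s) := by
  intro p hp q hq
  simp only [slab, Finset.mem_filter, Finset.mem_univ, true_and] at hp hq
  obtain ⟨i, hi⟩ := h _ hp _ hq
  induction i using Fin.cases with
  | zero => simp only [Fin.cons_zero] at hi; omega
  | succ j => exact ⟨j, by simpa [Fin.cons_succ] using hi⟩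

noncomputable def cst : ℕ → ℝ → ℝ
  | 0, δ => δ
  | (m+1), δ => min (1/2) (min (δ/8) ((δ/2) * cst m (δ/8)))

lemma cst_pos : ∀ (m : ℕ) {δ : ℝ}, 0 < δ → δ < 1 → 0 < cst m δ ∧ cst m δ < 1 := by
  intro m
  induction m with
  | zero => intro δ h0 h1; exact ⟨h0, h1⟩
  | succ m ih =>
    intro δ h0 h1
    have h8 : 0 < δ/8 := by linarith
    have h8' : δ/8 < 1 := by linarith
    obtain ⟨hc0, _⟩ := ih h8 h8'
    constructor
    · simp only [cst, lt_min_iff]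
      refine ⟨by norm_num, by linarith, by positivity⟩
    · calc cst (m+1) δ ≤ 1/2 := min_le_left _ _
        _ < 1 := by norm_num

lemma pow_succ_le {K : ℝ} (hK : 1 ≤ K) (m : ℕ) : K ^ m ≤ K * K ^ (m - 1) := by
  cases m with
  | zero => simpa using hK
  | succ p => simp [pow_succ, mul_comm]

lemma caseII {m k : ℕ} (δ : ℝ) (h0 : 0 < δ) (h1 : δ < 1) (hk : 0 < k)
    (IH : ∀ (δ' : ℝ), 0 < δ' → δ' < 1 → ∀ (W B G : Finset (Fin m → Fin k)),
      (∀ x, x ∈ W ∨ x ∈ B ∨ x ∈ G) → GSep W B →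
      δ' * (k:ℝ)^m ≤ W.card → δ' * (k:ℝ)^m ≤ B.card → cst m δ' * (k:ℝ)^(m-1) ≤ G.card)
    (W B G : Finset (Fin (m+1) → Fin k))
    (cover : ∀ x, x ∈ W ∨ x ∈ B ∨ x ∈ G) (sep : GSep W B)
    (hW : δ * (k:ℝ)^(m+1) ≤ W.card)
    (hnd : ∀ s, (δ/4) * (k:ℝ)^m < ((slab B s).card:ℝ) + ((slab G s).card:ℝ))
    (hg : ∀ s, ((slab G s).card:ℝ) < (δ/8) * (k:ℝ)^m) :
    (δ/2) * cst m (δ/8) * (k:ℝ)^m ≤ (G.card:ℝ) := by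
  set K : ℝ := (k:ℝ) with hKdef
  have hK : (0:ℝ) < K := by rw [hKdef]; exact_mod_cast hk
  have hK1 : (1:ℝ) ≤ K := by rw [hKdef]; exact Nat.one_le_cast.mpr hk
  have hKm : (0:ℝ) < K ^ m := pow_pos hK m
  have h8 : 0 < δ/8 := by linarith
  have h8' : δ/8 < 1 := by linarith
  obtain ⟨hc0, hc1⟩ := cst_pos m h8 h8'
  set Big : Finset (Fin k) := Finset.univ.filter (fun s => (δ/2) * K^m ≤ ((slab W s).card:ℝ)) with hBigdef
  -- lower bound on Big.card
  have hsplit := Finset.sum_filter_add_sum_filter_not Finset.univ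
    (fun s => (δ/2) * K^m ≤ ((slab W s).card:ℝ)) (fun s => ((slab W s).card:ℝ))
  have hWsum : δ * K^(m+1) ≤ ∑ s : Fin k, ((slab W s).card:ℝ) := by
    calc δ * K^(m+1) ≤ (W.card:ℝ) := hW
      _ = ∑ s : Fin k, ((slab W s).card:ℝ) := by rw [card_eq_sum_slab W]; push_cast; ring
  have hb1 : ∑ s ∈ Big, ((slab W s).card:ℝ) ≤ (Big.card:ℝ) * K^m := by
    calc ∑ s ∈ Big, ((slab W s).card:ℝ) ≤ ∑ s ∈ Big, K^m := by
          refine Finset.sum_le_sum fun s _ => ?_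
          have := slab_card_le W s
          rw [hKdef]
          exact_mod_cast this
      _ = (Big.card:ℝ) * K^m := by rw [Finset.sum_const]; ring
  have hb2 : ∑ s ∈ Finset.univ.filter (fun s => ¬ ((δ/2) * K^m ≤ ((slab W s).card:ℝ))), ((slab W s).card:ℝ)
      ≤ K * ((δ/2) * K^m) := by
    calc _ ≤ ∑ _s ∈ Finset.univ.filter (fun s => ¬ ((δ/2) * K^m ≤ ((slab W s).card:ℝ))), ((δ/2) * K^m) := by
          refine Finset.sum_le_sum fun s hs => ?_
          simp only [Finset.mem_filter, not_le] at hs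
          exact le_of_lt hs.2
      _ ≤ K * ((δ/2) * K^m) := by
          rw [Finset.sum_const, nsmul_eq_mul]
          have hcard := Finset.card_filter_le (Finset.univ : Finset (Fin k))
            (fun s => ¬ ((δ/2) * K^m ≤ ((slab W s).card:ℝ)))
          rw [Finset.card_univ, Fintype.card_fin] at hcard
          have : ((Finset.univ.filter (fun s => ¬ ((δ/2) * K^m ≤ ((slab W s).card:ℝ)))).card : ℝ) ≤ K := by
            rw [hKdef]; exact Nat.cast_le.mpr hcard
          have hpos : (0:ℝ) ≤ (δ/2) * K^m := by positivity
          exact mul_le_mul_of_nonneg_right this hpos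
  have hBigcard : (δ/2) * K ≤ (Big.card:ℝ) := by
    have : δ * K^(m+1) ≤ (Big.card:ℝ) * K^m + K * ((δ/2) * K^m) := by
      calc δ * K^(m+1) ≤ ∑ s : Fin k, ((slab W s).card:ℝ) := hWsum
        _ = ∑ s ∈ Big, ((slab W s).card:ℝ)
            + ∑ s ∈ Finset.univ.filter (fun s => ¬ ((δ/2) * K^m ≤ ((slab W s).card:ℝ))), ((slab W s).card:ℝ) := by
            rw [hBigdef, hsplit]
        _ ≤ (Big.card:ℝ) * K^m + K * ((δ/2) * K^m) := add_le_add hb1 hb2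
    have hKm1 : K^(m+1) = K * K^m := by ring
    nlinarith [hKm, this]
  -- per-slab gray bound
  have hslab : ∀ s ∈ Big, cst m (δ/8) * K^(m-1) ≤ ((slab G s).card:ℝ) := by
    intro s hs
    simp only [hBigdef, Finset.mem_filter, Finset.mem_univ, true_and] at hs
    refine IH (δ/8) h8 h8' (slab W s) (slab B s) (slab G s) (slab_cover cover s) (gsep_slab sep s) ?_ ?_
    · calc (δ/8) * K^m ≤ (δ/2) * K^m := by nlinarith
        _ ≤ _ := hs
    · have := hnd s
      have := hg s
      linarith
  -- sum up
  have hGsum : ∑ s ∈ Big, ((slab G s).card:ℝ) ≤ (G.card:ℝ) := by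
    calc ∑ s ∈ Big, ((slab G s).card:ℝ) ≤ ∑ s : Fin k, ((slab G s).card:ℝ) :=
        Finset.sum_le_sum_of_subset_of_nonneg (Finset.subset_univ _) (fun s _ _ => by positivity)
      _ = (G.card:ℝ) := by rw [card_eq_sum_slab G]; push_cast; ring
  have hlow : (Big.card:ℝ) * (cst m (δ/8) * K^(m-1)) ≤ ∑ s ∈ Big, ((slab G s).card:ℝ) := by
    have h1 : ∑ _s ∈ Big, (cst m (δ/8) * K^(m-1)) ≤ ∑ s ∈ Big, ((slab G s).card:ℝ) :=
      Finset.sum_le_sum hslab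
    rw [Finset.sum_const, nsmul_eq_mul] at h1
    exact h1

  have hKm1 : K^m ≤ K * K^(m-1) := pow_succ_le hK1 m
  have hKm1' : (0:ℝ) < K^(m-1) := pow_pos hK _
  calc (δ/2) * cst m (δ/8) * K^m ≤ (δ/2) * cst m (δ/8) * (K * K^(m-1)) := by
        refine mul_le_mul_of_nonneg_left hKm1 (by positivity)
    _ = ((δ/2) * K) * (cst m (δ/8) * K^(m-1)) := by ring
    _ ≤ (Big.card:ℝ) * (cst m (δ/8) * K^(m-1)) := by
        refine mul_le_mul_of_nonneg_right hBigcard (by positivity)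
    _ ≤ ∑ s ∈ Big, ((slab G s).card:ℝ) := hlow
    _ ≤ (G.card:ℝ) := hGsum

lemma discrete : ∀ (m : ℕ) (δ : ℝ), 0 < δ → δ < 1 → ∀ (k : ℕ), 0 < k →
    ∀ (W B G : Finset (Fin m → Fin k)), (∀ x, x ∈ W ∨ x ∈ B ∨ x ∈ G) → GSep W B →
    δ * (k:ℝ)^m ≤ (W.card:ℝ) → δ * (k:ℝ)^m ≤ (B.card:ℝ) →
    cst m δ * (k:ℝ)^(m-1) ≤ (G.card:ℝ) := by
  intro m
  induction m with
  | zero =>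
    intro δ h0 h1 k hk W B G cover sep hW hB
    exfalso
    have hWne : W.Nonempty := by
      rw [← Finset.card_pos]
      exact_mod_cast lt_of_lt_of_le (by positivity : (0:ℝ) < δ * (k:ℝ)^0) hW
    have hBne : B.Nonempty := by
      rw [← Finset.card_pos]
      exact_mod_cast lt_of_lt_of_le (by positivity : (0:ℝ) < δ * (k:ℝ)^0) hB
    obtain ⟨w, hw⟩ := hWne
    obtain ⟨b, hb⟩ := hBne
    obtain ⟨i, _⟩ := sep w hw b hb
    exact i.elim0
  | succ m IH =>
    intro δ h0 h1 k hk W B G cover sep hW hB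
    set K : ℝ := (k:ℝ) with hKdef
    have hK : (0:ℝ) < K := by rw [hKdef]; exact_mod_cast hk
    have hK1 : (1:ℝ) ≤ K := by rw [hKdef]; exact Nat.one_le_cast.mpr hk
    have hKm : (0:ℝ) < K ^ m := pow_pos hK m
    have h8 : 0 < δ/8 := by linarith
    have h8' : δ/8 < 1 := by linarith
    obtain ⟨hc0, hc1⟩ := cst_pos m h8 h8'
    have hsucc : (m + 1) - 1 = m := rfl
    rw [hsucc]
    have hle1 : cst (m+1) δ ≤ δ/8 := by
      calc cst (m+1) δ ≤ min (δ/8) ((δ/2) * cst m (δ/8)) := min_le_right _ _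
        _ ≤ δ/8 := min_le_left _ _
    have hle2 : cst (m+1) δ ≤ (δ/2) * cst m (δ/8) := by
      calc cst (m+1) δ ≤ min (δ/8) ((δ/2) * cst m (δ/8)) := min_le_right _ _
        _ ≤ _ := min_le_right _ _
    have hle3 : cst (m+1) δ ≤ 1/2 := min_le_left _ _
    have IH' : ∀ (δ' : ℝ), 0 < δ' → δ' < 1 → ∀ (W B G : Finset (Fin m → Fin k)),
        (∀ x, x ∈ W ∨ x ∈ B ∨ x ∈ G) → GSep W B →
        δ' * (k:ℝ)^m ≤ (W.card:ℝ) → δ' * (k:ℝ)^m ≤ (B.card:ℝ) →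
        cst m δ' * (k:ℝ)^(m-1) ≤ (G.card:ℝ) :=
      fun δ' a b => IH δ' a b k hk
    -- a single gray slab suffices
    by_cases hbig : ∃ s, (δ/8) * K^m ≤ ((slab G s).card:ℝ)
    · obtain ⟨s, hs⟩ := hbig
      have h1' : ((slab G s).card:ℝ) ≤ (G.card:ℝ) := by
        have : (slab G s).card ≤ G.card := by
          rw [card_eq_sum_slab G]
          exact Finset.single_le_sum (f := fun s => (slab G s).card)
            (fun _ _ => Nat.zero_le _) (Finset.mem_univ s)
        exact_mod_cast this
      calc cst (m+1) δ * K^m ≤ (δ/8) * K^m := mul_le_mul_of_nonneg_right hle1 (le_of_lt hKm)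
        _ ≤ ((slab G s).card:ℝ) := hs
        _ ≤ (G.card:ℝ) := h1'
    push_neg at hbig
    by_cases hWd : ∀ s, (δ/4) * K^m < ((slab B s).card:ℝ) + ((slab G s).card:ℝ)
    · -- no W-dominant slab: use caseII with W,B
      have h := caseII δ h0 h1 hk IH' W B G cover sep hW hWd hbig
      calc cst (m+1) δ * K^m ≤ (δ/2) * cst m (δ/8) * K^m :=
          mul_le_mul_of_nonneg_right hle2 (le_of_lt hKm)
        _ ≤ (G.card:ℝ) := h
    by_cases hBd : ∀ t, (δ/4) * K^m < ((slab W t).card:ℝ) + ((slab G t).card:ℝ)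
    · -- no B-dominant slab: use caseII with roles swapped
      have cover' : ∀ x, x ∈ B ∨ x ∈ W ∨ x ∈ G := by
        intro x; rcases cover x with h|h|h
        exacts [Or.inr (Or.inl h), Or.inl h, Or.inr (Or.inr h)]
      have h := caseII δ h0 h1 hk IH' B W G cover' (gsep_symm sep) hB hBd hbig
      calc cst (m+1) δ * K^m ≤ (δ/2) * cst m (δ/8) * K^m :=
          mul_le_mul_of_nonneg_right hle2 (le_of_lt hKm)
        _ ≤ (G.card:ℝ) := h
    -- Case I: both a W-dominant and a B-dominant slab exist
    push_neg at hWd hBd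
    obtain ⟨s, hsdom⟩ := hWd
    obtain ⟨t, htdom⟩ := hBd
    set P : Finset (Fin m → Fin k) :=
      Finset.univ.filter (fun p => Fin.cons s p ∈ W ∧ Fin.cons t p ∈ B) with hPdef
    have hcovP : (Finset.univ : Finset (Fin m → Fin k)) ⊆
        ((((P ∪ slab B s) ∪ slab G s) ∪ slab W t) ∪ slab G t) := by
      intro p _
      by_cases h1p : Fin.cons s p ∈ W
      · by_cases h2p : Fin.cons t p ∈ B
        · simp only [Finset.mem_union]
          exact Or.inl (Or.inl (Or.inl (Or.inl (by simp [hPdef, h1p, h2p]))))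
        · rcases cover (Fin.cons t p) with h|h|h
          · simp only [Finset.mem_union]
            exact Or.inl (Or.inr (by simp [slab, h]))
          · exact absurd h h2p
          · simp only [Finset.mem_union]
            exact Or.inr (by simp [slab, h])
      · rcases cover (Fin.cons s p) with h|h|h
        · exact absurd h h1p
        · simp only [Finset.mem_union]
          exact Or.inl (Or.inl (Or.inl (Or.inr (by simp [slab, h]))))
        · simp only [Finset.mem_union]
          exact Or.inl (Or.inl (Or.inr (by simp [slab, h])))
    have hcount : (k:ℕ)^m ≤ P.card + (slab B s).card + (slab G s).card
        + (slab W t).card + (slab G t).card := by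
      calc (k:ℕ)^m = (Finset.univ : Finset (Fin m → Fin k)).card := by
            simp [Finset.card_univ]
        _ ≤ (((((P ∪ slab B s) ∪ slab G s) ∪ slab W t) ∪ slab G t)).card :=
            Finset.card_le_card hcovP
        _ ≤ ((((P ∪ slab B s) ∪ slab G s) ∪ slab W t)).card + (slab G t).card :=
            Finset.card_union_le _ _
        _ ≤ (((P ∪ slab B s) ∪ slab G s)).card + (slab W t).card + (slab G t).card :=
            Nat.add_le_add_right (Finset.card_union_le _ _) _
        _ ≤ (P ∪ slab B s).card + (slab G s).card + (slab W t).card + (slab G t).card := by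
            exact Nat.add_le_add_right (Nat.add_le_add_right (Finset.card_union_le _ _) _) _
        _ ≤ P.card + (slab B s).card + (slab G s).card + (slab W t).card + (slab G t).card := by
            exact Nat.add_le_add_right (Nat.add_le_add_right
              (Nat.add_le_add_right (Finset.card_union_le _ _) _) _) _
    have hPcard : (1/2) * K^m ≤ (P.card:ℝ) := by
      have hcast : K^m ≤ (P.card:ℝ) + (((slab B s).card:ℝ) + ((slab G s).card:ℝ))
          + (((slab W t).card:ℝ) + ((slab G t).card:ℝ)) := by
        have : ((k^m : ℕ):ℝ) ≤ ((P.card + (slab B s).card + (slab G s).card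
            + (slab W t).card + (slab G t).card : ℕ):ℝ) := Nat.cast_le.mpr hcount
        push_cast at this
        rw [hKdef]
        push_cast
        linarith
      nlinarith [hKm]
    have hPG : P.card ≤ G.card := by
      apply Finset.card_le_card_of_injOn
        (fun p => if h : (Fin.cons s p ∈ W ∧ Fin.cons t p ∈ B)
          then Fin.cons (Classical.choose (line_gray cover sep h.1 h.2)) p else Fin.cons s p)
      · intro p hp
        simp only [hPdef, Finset.mem_coe, Finset.mem_filter, Finset.mem_univ, true_and] at hp
        simp only [dif_pos hp]
        exact Classical.choose_spec (line_gray cover sep hp.1 hp.2)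
      · intro p hp q hq h
        simp only [hPdef, Finset.coe_filter, Finset.mem_univ, Set.mem_setOf_eq, true_and] at hp hq
        simp only [dif_pos hp, dif_pos hq] at h
        have := congrArg Fin.tail h
        simpa [Fin.tail_cons] using this
    calc cst (m+1) δ * K^m ≤ (1/2) * K^m := mul_le_mul_of_nonneg_right hle3 (le_of_lt hKm)
      _ ≤ (P.card:ℝ) := hPcard
      _ ≤ (G.card:ℝ) := Nat.cast_le.mpr hPG

def gcube (n k : ℕ) (r : ℝ) (c : Fin n → ℝ) (j : Fin n → Fin k) : Set (Fin n → ℝ) :=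
  {y | ∀ i, c i - r/2 + (j i : ℝ) * (r/k) ≤ y i ∧ y i ≤ c i - r/2 + ((j i : ℝ) + 1) * (r/k)}

lemma gcube_eq_pi (n k : ℕ) (r : ℝ) (c : Fin n → ℝ) (j : Fin n → Fin k) :
    gcube n k r c j = Set.pi Set.univ
      (fun i => Set.Icc (c i - r/2 + (j i : ℝ) * (r/k)) (c i - r/2 + ((j i : ℝ) + 1) * (r/k))) := by
  ext y
  simp only [gcube, Set.mem_setOf_eq, Set.mem_univ_pi, Set.mem_Icc]

open MeasureTheory in
lemma gcube_volume (n k : ℕ) (r : ℝ) (c : Fin n → ℝ) (j : Fin n → Fin k) :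
    volume (gcube n k r c j) = (ENNReal.ofReal (r/k))^n := by
  rw [gcube_eq_pi, volume_pi_pi]
  have : ∀ i : Fin n, volume (Set.Icc (c i - r/2 + (j i : ℝ) * (r/k)) (c i - r/2 + ((j i : ℝ) + 1) * (r/k)))
      = ENNReal.ofReal (r/k) := by
    intro i
    rw [Real.volume_Icc]
    congr 1
    ring
  rw [Finset.prod_congr rfl (fun i _ => this i), Finset.prod_const]
  simp

lemma gcube_convex (n k : ℕ) (r : ℝ) (c : Fin n → ℝ) (j : Fin n → Fin k) :
    Convex ℝ (gcube n k r c j) := by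
  rw [gcube_eq_pi]
  exact convex_pi (fun i _ => convex_Icc _ _)

lemma aux_interval (k : ℕ) (hk : 0 < k) (r t : ℝ) (hr : 0 < r) (ht0 : 0 ≤ t) (htr : t ≤ r) :
    ((min (⌊t * k / r⌋₊) (k-1) : ℕ):ℝ) * (r/k) ≤ t ∧
      t ≤ ((((min (⌊t * k / r⌋₊) (k-1) : ℕ)):ℝ) + 1) * (r/k) := by
  have hrk : (0:ℝ) < r / k := by positivity
  set m0 : ℕ := ⌊t * k / r⌋₊ with hm0
  have hfl : (m0:ℝ) ≤ t * k / r := Nat.floor_le (by positivity)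
  have h3 : (t * k / r) * (r/k) = t := by field_simp
  constructor
  · have h1 : ((min m0 (k-1) : ℕ):ℝ) ≤ t * k / r := by
      calc ((min m0 (k-1) : ℕ):ℝ) ≤ (m0:ℝ) := by exact_mod_cast min_le_left _ _
        _ ≤ t * k / r := hfl
    have h2 : ((min m0 (k-1) : ℕ):ℝ) * (r/k) ≤ (t * k / r) * (r/k) :=
      mul_le_mul_of_nonneg_right h1 (le_of_lt hrk)
    rw [h3] at h2
    exact h2
  · by_cases hcase : m0 ≤ k - 1
    · have hmin : min m0 (k-1) = m0 := min_eq_left hcase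
      have h1 : t * k / r < (m0:ℝ) + 1 := Nat.lt_floor_add_one _
      have h2 : t < ((m0:ℝ) + 1) * (r/k) := by
        have h4 := mul_lt_mul_of_pos_right h1 hrk
        rw [h3] at h4
        exact h4
      rw [hmin]
      linarith
    · have hmin : min m0 (k-1) = k - 1 := min_eq_right (le_of_not_ge hcase)
      rw [hmin]
      have hcast : (((k-1 : ℕ)):ℝ) + 1 = (k:ℝ) := by
        have h5 : (k - 1) + 1 = k := Nat.succ_pred_eq_of_pos hk
        exact_mod_cast h5
      rw [hcast]
      have h6 : (k:ℝ) * (r/k) = r := by field_simp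
      rw [h6]
      exact htr

lemma exists_gcube (n k : ℕ) (hk : 0 < k) (r : ℝ) (hr : 0 < r) (c : Fin n → ℝ)
    (y : Fin n → ℝ) (hy : ∀ i, |y i - c i| ≤ r/2) :
    ∃ j : Fin n → Fin k, y ∈ gcube n k r c j := by
  refine ⟨fun i => ⟨min (⌊(y i - (c i - r/2)) * k / r⌋₊) (k-1), ?_⟩, fun i => ?_⟩
  · have h : min (⌊(y i - (c i - r/2)) * k / r⌋₊) (k-1) ≤ k - 1 := min_le_right _ _
    omega
  · have ht0 : 0 ≤ y i - (c i - r/2) := by have := abs_le.mp (hy i); linarith [this.1]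
    have htr : y i - (c i - r/2) ≤ r := by have := abs_le.mp (hy i); linarith [this.2]
    have haux := aux_interval k hk r (y i - (c i - r/2)) hr ht0 htr
    show c i - r/2 + ((min (⌊(y i - (c i - r/2)) * k / r⌋₊) (k-1) : ℕ):ℝ) * (r/k) ≤ y i ∧
      y i ≤ c i - r/2 + (((min (⌊(y i - (c i - r/2)) * k / r⌋₊) (k-1) : ℕ):ℝ) + 1) * (r/k)
    constructor
    · linarith [haux.1]
    · linarith [haux.2]

lemma gcube_touch (n k : ℕ) (hk : 0 < k) (r : ℝ) (hr : 0 < r) (c : Fin n → ℝ)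
    (j j' : Fin n → Fin k) (hadj : ∀ i, (((j i : ℕ):ℤ) - ((j' i : ℕ):ℤ)).natAbs ≤ 1) :
    (gcube n k r c j ∩ gcube n k r c j').Nonempty := by
  have hrk : (0:ℝ) < r / k := by positivity
  refine ⟨fun i => c i - r/2 + ((max (j i : ℕ) (j' i : ℕ) : ℕ):ℝ) * (r/k), ?_, ?_⟩
  · intro i
    have h1 : ((j i : ℕ):ℝ) ≤ ((max (j i : ℕ) (j' i : ℕ) : ℕ):ℝ) := by
      exact_mod_cast le_max_left _ _
    have h2 : ((max (j i : ℕ) (j' i : ℕ) : ℕ):ℝ) ≤ ((j i : ℕ):ℝ) + 1 := by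
      have := hadj i
      have : max (j i : ℕ) (j' i : ℕ) ≤ (j i : ℕ) + 1 := by omega
      exact_mod_cast this
    constructor
    · have := mul_le_mul_of_nonneg_right h1 (le_of_lt hrk); linarith
    · have := mul_le_mul_of_nonneg_right h2 (le_of_lt hrk); nlinarith [hrk]
  · intro i
    have h1 : ((j' i : ℕ):ℝ) ≤ ((max (j i : ℕ) (j' i : ℕ) : ℕ):ℝ) := by
      exact_mod_cast le_max_right _ _
    have h2 : ((max (j i : ℕ) (j' i : ℕ) : ℕ):ℝ) ≤ ((j' i : ℕ):ℝ) + 1 := by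
      have := hadj i
      have : max (j i : ℕ) (j' i : ℕ) ≤ (j' i : ℕ) + 1 := by omega
      exact_mod_cast this
    constructor
    · have := mul_le_mul_of_nonneg_right h1 (le_of_lt hrk); linarith
    · have := mul_le_mul_of_nonneg_right h2 (le_of_lt hrk); nlinarith [hrk]

open MeasureTheory in
lemma keyvol (n k : ℕ) (hk : 0 < k) (r : ℝ) (hr : 0 < r) (c : Fin n → ℝ) (csharp : ℝ)
    (S : Set (Fin n → ℝ)) (F : Finset (Fin n → Fin k))
    (hsub : S ⊆ ⋃ j ∈ F, gcube n k r c j) (hvol : csharp * r^n ≤ (volume S).toReal) :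
    csharp * (k:ℝ)^n ≤ (F.card:ℝ) := by
  have h1 : volume S ≤ ∑ j ∈ F, volume (gcube n k r c j) :=
    le_trans (measure_mono hsub) (measure_biUnion_finset_le F _)
  rw [Finset.sum_congr rfl (fun j _ => gcube_volume n k r c j), Finset.sum_const] at h1
  have hxne : ((ENNReal.ofReal (r/k))^n : ENNReal) ≠ ⊤ := ENNReal.pow_ne_top ENNReal.ofReal_ne_top
  have htop : (F.card • ((ENNReal.ofReal (r/k))^n) : ENNReal) ≠ ⊤ := by
    rw [nsmul_eq_mul]
    exact ENNReal.mul_ne_top (ENNReal.natCast_ne_top _) hxne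
  have h2 : (volume S).toReal ≤ (F.card:ℝ) * (r/k)^n := by
    have h2' := ENNReal.toReal_mono htop h1
    rw [nsmul_eq_mul, ENNReal.toReal_mul, ENNReal.toReal_pow,
      ENNReal.toReal_ofReal (by positivity : (0:ℝ) ≤ r/k)] at h2'
    simpa using h2'
  have h3 : csharp * r^n ≤ (F.card:ℝ) * (r/k)^n := le_trans hvol h2
  have hkpos : (0:ℝ) < (k:ℝ)^n := pow_pos (by exact_mod_cast hk) n
  have hrn : (0:ℝ) < r^n := pow_pos hr n
  rw [div_pow] at h3
  have h4 : (r^n/(k:ℝ)^n) * (k:ℝ)^n = r^n := by field_simp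
  have h5 := mul_le_mul_of_nonneg_right h3 (le_of_lt hkpos)
  rw [mul_assoc ((F.card:ℝ)), h4] at h5
  refine le_of_mul_le_mul_right ?_ hrn
  calc csharp * (k:ℝ)^n * r^n = csharp * r^n * (k:ℝ)^n := by ring
    _ ≤ (F.card:ℝ) * r^n := h5

/-- if `A` occupies and misses a definite fraction of the cube `Q_r`,
then at least `c⋆ k^(n-1)` of the `k^n` subcubes of a grid decomposition of `Q_r`
meet `∂A`. -/
theorem statement_2 (n : ℕ) (hn : 1 ≤ n) (csharp : ℝ) (hcsharp : csharp ∈ Set.Ioo (0 : ℝ) 1) :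
    ∃ cstar : ℝ, cstar ∈ Set.Ioo (0 : ℝ) 1 ∧
      ∀ (r : ℝ), 0 < r → ∀ (c : Fin n → ℝ) (A : Set (Fin n → ℝ)), IsOpen A →
        csharp * r ^ n ≤
          min (volume (A ∩ {y : Fin n → ℝ | ∀ i, |y i - c i| ≤ r/2})).toReal
              (volume ({y : Fin n → ℝ | ∀ i, |y i - c i| ≤ r/2} \ closure A)).toReal →
        ∀ k : ℕ, 0 < k →
          cstar * (k : ℝ) ^ (n - 1) ≤
            ((Finset.univ.filter (fun j : Fin n → Fin k =>
              ({y : Fin n → ℝ | ∀ i, c i - r/2 + (j i : ℝ) * (r/k) ≤ y i ∧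
                  y i ≤ c i - r/2 + ((j i : ℝ) + 1) * (r/k)} ∩ frontier A).Nonempty)).card : ℝ) := by
  obtain ⟨hcs0, hcs1⟩ := hcsharp
  have hδ0 : (0:ℝ) < csharp/2 := by linarith
  have hδ1 : csharp/2 < 1 := by linarith
  obtain ⟨hcst0, hcst1⟩ := cst_pos n hδ0 hδ1
  refine ⟨min (csharp/2) (cst n (csharp/2)),
    ⟨lt_min hδ0 hcst0, lt_of_le_of_lt (min_le_left _ _) hδ1⟩, ?_⟩
  intro r hr c A hA hmin k hk
  set W : Finset (Fin n → Fin k) := Finset.univ.filter (fun j => gcube n k r c j ⊆ A) with hWdef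
  set B : Finset (Fin n → Fin k) :=
    Finset.univ.filter (fun j => gcube n k r c j ⊆ (closure A)ᶜ) with hBdef
  set G : Finset (Fin n → Fin k) :=
    Finset.univ.filter (fun j => (gcube n k r c j ∩ frontier A).Nonempty) with hGdef
  show min (csharp/2) (cst n (csharp/2)) * (k:ℝ)^(n-1) ≤ (G.card:ℝ)
  -- cover
  have cover : ∀ j, j ∈ W ∨ j ∈ B ∨ j ∈ G := by
    intro j
    by_cases hj : (gcube n k r c j ∩ frontier A).Nonempty
    · exact Or.inr (Or.inr (Finset.mem_filter.mpr ⟨Finset.mem_univ _, hj⟩))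
    · have hsub : gcube n k r c j ⊆ A ∪ (closure A)ᶜ := by
        intro x hx
        by_cases hxA : x ∈ A
        · exact Set.mem_union_left _ hxA
        by_cases hxc : x ∈ closure A
        · exact absurd ⟨x, hx, by rw [hA.frontier_eq]; exact ⟨hxc, hxA⟩⟩ hj
        · exact Set.mem_union_right _ hxc
      rcases IsPreconnected.subset_or_subset hA (isClosed_closure (s := A)).isOpen_compl
          (disjoint_compl_right.mono_left subset_closure) hsub
          (gcube_convex n k r c j).isPreconnected with h | h
      · exact Or.inl (Finset.mem_filter.mpr ⟨Finset.mem_univ _, h⟩)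
      · exact Or.inr (Or.inl (Finset.mem_filter.mpr ⟨Finset.mem_univ _, h⟩))
  -- separation
  have sep : GSep W B := by
    intro w hw b hb
    by_contra hcon
    push_neg at hcon
    have hadj : ∀ i, (((w i : ℕ):ℤ) - ((b i : ℕ):ℤ)).natAbs ≤ 1 := fun i => by
      have := hcon i; omega
    obtain ⟨y, hy1, hy2⟩ := gcube_touch n k hk r hr c w b hadj
    simp only [hWdef, hBdef, Finset.mem_filter, Finset.mem_univ, true_and] at hw hb
    exact (hb hy2) (subset_closure (hw hy1))
  -- covering inclusions
  have hsubW : A ∩ {y : Fin n → ℝ | ∀ i, |y i - c i| ≤ r/2} ⊆ ⋃ j ∈ (W ∪ G), gcube n k r c j := by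
    rintro y ⟨hyA, hyQ⟩
    obtain ⟨j, hj⟩ := exists_gcube n k hk r hr c y hyQ
    refine Set.mem_biUnion ?_ hj
    rcases cover j with h | h | h
    · exact Finset.mem_union_left _ h
    · exfalso
      simp only [hBdef, Finset.mem_filter, Finset.mem_univ, true_and] at h
      exact (h hj) (subset_closure hyA)
    · exact Finset.mem_union_right _ h
  have hsubB : {y : Fin n → ℝ | ∀ i, |y i - c i| ≤ r/2} \ closure A
      ⊆ ⋃ j ∈ (B ∪ G), gcube n k r c j := by
    rintro y ⟨hyQ, hyc⟩
    obtain ⟨j, hj⟩ := exists_gcube n k hk r hr c y hyQ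
    refine Set.mem_biUnion ?_ hj
    rcases cover j with h | h | h
    · exfalso
      simp only [hWdef, Finset.mem_filter, Finset.mem_univ, true_and] at h
      exact hyc (subset_closure (h hj))
    · exact Finset.mem_union_left _ h
    · exact Finset.mem_union_right _ h
  -- volume lower bounds
  have hW1 : csharp * (k:ℝ)^n ≤ ((W ∪ G).card : ℝ) :=
    keyvol n k hk r hr c csharp _ _ hsubW (le_trans hmin (min_le_left _ _))
  have hB1 : csharp * (k:ℝ)^n ≤ ((B ∪ G).card : ℝ) :=
    keyvol n k hk r hr c csharp _ _ hsubB (le_trans hmin (min_le_right _ _))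
  have hWG : csharp * (k:ℝ)^n ≤ (W.card : ℝ) + (G.card : ℝ) := by
    refine le_trans hW1 ?_
    have := Finset.card_union_le W G
    exact_mod_cast this
  have hBG : csharp * (k:ℝ)^n ≤ (B.card : ℝ) + (G.card : ℝ) := by
    refine le_trans hB1 ?_
    have := Finset.card_union_le B G
    exact_mod_cast this
  -- conclusion
  have hK1 : (1:ℝ) ≤ (k:ℝ) := Nat.one_le_cast.mpr hk
  have hkn0 : (0:ℝ) ≤ (k:ℝ)^(n-1) := by positivity
  have hkn1 : (k:ℝ)^(n-1) ≤ (k:ℝ)^n := pow_le_pow_right₀ hK1 (Nat.sub_le n 1)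
  by_cases hGbig : (csharp/2) * (k:ℝ)^n ≤ (G.card:ℝ)
  · calc min (csharp/2) (cst n (csharp/2)) * (k:ℝ)^(n-1)
        ≤ (csharp/2) * (k:ℝ)^(n-1) := mul_le_mul_of_nonneg_right (min_le_left _ _) hkn0
      _ ≤ (csharp/2) * (k:ℝ)^n := mul_le_mul_of_nonneg_left hkn1 (le_of_lt hδ0)
      _ ≤ (G.card:ℝ) := hGbig
  · push_neg at hGbig
    have hW2 : (csharp/2) * (k:ℝ)^n ≤ (W.card:ℝ) := by linarith
    have hB2 : (csharp/2) * (k:ℝ)^n ≤ (B.card:ℝ) := by linarith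
    have hdisc := discrete n (csharp/2) hδ0 hδ1 k hk W B G cover sep hW2 hB2
    calc min (csharp/2) (cst n (csharp/2)) * (k:ℝ)^(n-1)
        ≤ cst n (csharp/2) * (k:ℝ)^(n-1) := mul_le_mul_of_nonneg_right (min_le_right _ _) hkn0
      _ ≤ (G.card:ℝ) := hdisc
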